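/- If u ▷_{βΩ}* v, then there exists a term w such that u ▷* w and w ▷_Ω* v (Ω-reduction steps can be postponed after β-reduction steps). -/

import Mathlib

/-! ## A de Bruijn presentation of the untyped λ-calculus -/

/-- Untyped λ-terms in de Bruijn representation. -/
inductive Lam : Type where
  | var : ℕ → Lam
  | app : Lam → Lam → Lam
  | abs : Lam → Lam
  deriving DecidableEq

namespace Lam

/-- Lifting of de Bruijn indices (cutoff `d`). -/
def lift (d : ℕ) : Lam → Lam
  | var n => if n < d then var n else var (n + 1)
  | app a b => app (lift d a) (lift d b)
  | abs a => abs (lift (d + 1) a)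

/-- Capture-avoiding substitution of `u` for the free variable `k`. -/
def subst : Lam → ℕ → Lam → Lam
  | var n, k, u => if n = k then u else if k < n then var (n - 1) else var n
  | app a b, k, u => app (subst a k u) (subst b k u)
  | abs a, k, u => abs (subst a (k + 1) (lift 0 u))

/-- One-step β-reduction `▷`. -/
inductive Step : Lam → Lam → Prop
  | beta (a b : Lam) : Step (app (abs a) b) (subst a 0 b)
  | appL {a a' : Lam} (b : Lam) : Step a a' → Step (app a b) (app a' b)
  | appR (a : Lam) {b b' : Lam} : Step b b' → Step (app a b) (app a b')
  | abs {a a' : Lam} : Step a a' → Step (Lam.abs a) (Lam.abs a')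

/-- β-reduction `▷*` : reflexive and transitive closure of `▷`. -/
def Steps : Lam → Lam → Prop := Relation.ReflTransGen Step

/-- β-normal term. -/
def Normal (t : Lam) : Prop := ∀ t', ¬ Step t t'

/-- `Free x t` : the variable `x` (de Bruijn index, seen from the root) occurs free in `t`. -/
def Free : ℕ → Lam → Prop
  | x, var n => x = n
  | x, app a b => Free x a ∨ Free x b
  | x, abs a => Free (x + 1) a

/-- Closed term. -/
def Closed (t : Lam) : Prop := ∀ x, ¬ Free x t

/-- A variable applied to a (possibly empty) list of arguments. -/
inductive HeadVarApp : Lam → Prop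
  | var (n : ℕ) : HeadVarApp (var n)
  | app {a : Lam} (b : Lam) : HeadVarApp a → HeadVarApp (app a b)

/-- Head normal forms `λx₁…λxₙ.(y t₁ … tₘ)`. -/
inductive IsHNF : Lam → Prop
  | head {t : Lam} : HeadVarApp t → IsHNF t
  | abs {a : Lam} : IsHNF a → IsHNF (Lam.abs a)

/-- A term is solvable if it β-reduces to a head normal form. -/
def Solvable (t : Lam) : Prop := ∃ h, Steps t h ∧ IsHNF h

/-- `Ω = (λx.(x x))(λx.(x x))`. -/
def Omega : Lam := app (abs (app (var 0) (var 0))) (abs (app (var 0) (var 0)))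

/-- Ω-reduction `▷_Ω` : replace an unsolvable subterm by `Ω`. -/
inductive OmegaStep : Lam → Lam → Prop
  | unsolv {t : Lam} : ¬ Solvable t → OmegaStep t Omega
  | appL {a a' : Lam} (b : Lam) : OmegaStep a a' → OmegaStep (app a b) (app a' b)
  | appR (a : Lam) {b b' : Lam} : OmegaStep b b' → OmegaStep (app a b) (app a b')
  | abs {a a' : Lam} : OmegaStep a a' → OmegaStep (Lam.abs a) (Lam.abs a')

/-- `▷_Ω*`. -/
def OmegaSteps : Lam → Lam → Prop := Relation.ReflTransGen OmegaStep

/-- `▷_{βΩ}` : union of `▷` and `▷_Ω`. -/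
def BOStep (t t' : Lam) : Prop := Step t t' ∨ OmegaStep t t'

/-- `▷_{βΩ}*`. -/
def BOSteps : Lam → Lam → Prop := Relation.ReflTransGen BOStep

/-- `u ≃ v` : equality in the λ-theory H (common `▷_{βΩ}*`-reduct). -/
def SimH (u v : Lam) : Prop := ∃ w, BOSteps u w ∧ BOSteps v w

/-- Simultaneous (parallel) substitution along `σ`. -/
def psubst (σ : ℕ → Lam) : Lam → Lam
  | var n => σ n
  | app a b => app (psubst σ a) (psubst σ b)
  | abs a => abs (psubst (fun n => match n with | 0 => var 0 | m + 1 => lift 0 (σ m)) a)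

/-- `(x V)` : the application of a head `h` to a list of arguments. -/
def mkApps (h : Lam) (as : List Lam) : Lam := as.foldl app h

/-- `U ⊑ V` : some initial segment of `V` is obtained from `U` by a substitution
followed by componentwise β-reductions. -/
def Sqsubseteq (U V : List Lam) : Prop :=
  ∃ (σ : ℕ → Lam) (W : List Lam), W <+: V ∧
    List.Forall₂ (fun u w => Steps (psubst σ u) w) U W

/-! ### Occurrences as positions -/

/-- Directions inside a term. -/
inductive Dir : Type where
  | left | right | down
  deriving DecidableEq

/-- Positions (occurrences) in a term. -/
abbrev Pos := List Dir

/-- The subterm of `t` at position `p` (if any). -/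
def subtermAt : Lam → Pos → Option Lam
  | t, [] => some t
  | app a _, Dir.left :: p => subtermAt a p
  | app _ b, Dir.right :: p => subtermAt b p
  | abs a, Dir.down :: p => subtermAt a p
  | _, _ :: _ => none

/-- Replace the subterm of `t` at position `p` by `s` (if the position exists). -/
def replaceAt : Lam → Pos → Lam → Option Lam
  | _, [], s => some s
  | app a b, Dir.left :: p, s => (replaceAt a p s).map (fun a' => app a' b)
  | app a b, Dir.right :: p, s => (replaceAt b p s).map (fun b' => app a b')
  | abs a, Dir.down :: p, s => (replaceAt a p s).map Lam.abs
  | _, _ :: _, _ => none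

/-- `OccOf x t p` : position `p` is an occurrence in `t` of the free variable `x`
(index seen from the root, hence shifted by the number of binders crossed). -/
def OccOf (x : ℕ) (t : Lam) (p : Pos) : Prop :=
  subtermAt t p = some (var (x + p.count Dir.down))

/-- `ArgOf t p V` : `V` is the maximal list of arguments, in `t`, of the occurrence
sitting at position `p`; i.e. `([] V)` is the applicative context of that occurrence. -/
def ArgOf (t : Lam) (p : Pos) (V : List Lam) : Prop :=
  ∃ (q : Pos) (h : Lam),
    p = q ++ List.replicate V.length Dir.left ∧
    (∀ q' : Pos, q ≠ q' ++ [Dir.left]) ∧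
    subtermAt t q = some (mkApps h V) ∧ subtermAt t p = some h

/-- `InArgOfOcc x t p q` : `q` is an occurrence of `x` in `t` and the position `p` lies
inside one of the elements of `Arg(x_[q], t)`. -/
def InArgOfOcc (x : ℕ) (t : Lam) (p q : Pos) : Prop :=
  OccOf x t q ∧ ∃ (r : Pos) (n : ℕ),
    q = r ++ List.replicate n Dir.left ∧
    (∀ r' : Pos, r ≠ r' ++ [Dir.left]) ∧
    ∃ (j : ℕ) (s : Pos), j < n ∧ p = r ++ List.replicate j Dir.left ++ Dir.right :: s

/-- The occurrence `p` of `x` is pure in `t` : no other occurrence `q` of `x` in `t`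
is such that `p` occurs in one of the elements of `Arg(x_[q], t)`. -/
def PureOcc (x : ℕ) (t : Lam) (p : Pos) : Prop :=
  OccOf x t p ∧ ∀ q, q ≠ p → ¬ InArgOfOcc x t p q

/-- Renaming of the free variable `y` into `x`. -/
def rename (y x : ℕ) : Lam → Lam
  | var n => if n = y then var x else var n
  | app a b => app (rename y x a) (rename y x b)
  | abs a => abs (rename (y + 1) (x + 1) a)

/-- `Residue x u v p p'` : along some β-reduction from `u` to `v`, the occurrence `p'` of
`x` in `v` is a residue (traced copy) of the occurrence `p` of `x` in `u`.  This is
expressed by marking the occurrence `p` of `x` with a fresh variable `y` and tracing the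
occurrences of `y`. -/
def Residue (x : ℕ) (u v : Lam) (p p' : Pos) : Prop :=
  ∃ (y : ℕ) (u₀ v₀ : Lam),
    ¬ Free y u ∧
    replaceAt u p (var (y + p.count Dir.down)) = some u₀ ∧
    Steps u₀ v₀ ∧ rename y x v₀ = v ∧ OccOf y v₀ p'

/-- The occurrence `p` of the free variable `0` ("x") in `G` is good with respect to the
closed term `A` : it is pure in `G` and `u[x:=A]` is solvable for every subterm `u` of
`G` in which this occurrence occurs. -/
def GoodOcc (A G : Lam) (p : Pos) : Prop :=
  PureOcc 0 G p ∧
    ∀ (q : Pos) (u : Lam), q <+: p → subtermAt G q = some u →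
      Solvable (subst u (q.count Dir.down) A)

/-! ### Miscellaneous -/

/-- A fixed effective Gödel numbering of λ-terms. -/
def code : Lam → ℕ
  | var n => Nat.pair 0 n
  | app a b => Nat.pair 1 (Nat.pair (code a) (code b))
  | abs a => Nat.pair 2 (code a)

/-- Body `f^k z` of the Church numeral. -/
def churchBody : ℕ → Lam
  | 0 => var 0
  | k + 1 => app (var 1) (churchBody k)

/-- The Church numeral `c_k = λf λz.(f^k z)`. -/
def church (k : ℕ) : Lam := abs (abs (churchBody k))

/-- `n`-fold abstraction `λx₁…λxₙ.t`. -/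
def absN : ℕ → Lam → Lam
  | 0, t => t
  | n + 1, t => abs (absN n t)

/-- Number of symbols of a term. -/
def size : Lam → ℕ
  | var _ => 1
  | app a b => size a + size b + 1
  | abs a => size a + 1

/-- Subterm relation. -/
inductive Subterm : Lam → Lam → Prop
  | refl (t : Lam) : Subterm t t
  | appL {s a : Lam} (b : Lam) : Subterm s a → Subterm s (app a b)
  | appR (a : Lam) {s b : Lam} : Subterm s b → Subterm s (app a b)
  | abs {s a : Lam} : Subterm s a → Subterm s (Lam.abs a)

/-- `t` contains no subterm of the form `(x u)` for the free variable `x`. -/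
def NoVarApp : ℕ → Lam → Prop
  | _, var _ => True
  | x, app a b => a ≠ var x ∧ NoVarApp x a ∧ NoVarApp x b
  | x, abs a => NoVarApp (x + 1) a

/-- Headed by the variable `d` : term of the form `(x V)` with `x = var d`. -/
inductive Headed : ℕ → Lam → Prop
  | var (d : ℕ) : Headed d (var d)
  | app {d : ℕ} {a : Lam} (b : Lam) : Headed d a → Headed d (app a b)

end Lam
namespace Lam
theorem lift_lift : ∀ (t : Lam) (i j : ℕ), i ≤ j →
    lift i (lift j t) = lift (j + 1) (lift i t) := by
  intro t
  induction t with
  | var n =>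
      intro i j h
      simp only [lift]
      split_ifs <;> simp only [lift] <;> split_ifs <;>
        first | rfl | (exfalso; omega) | (congr 1; omega)
  | app a b iha ihb => intro i j h; simp only [lift, iha _ _ h, ihb _ _ h]
  | abs a ih => intro i j h; simp only [lift]; rw [ih (i+1) (j+1) (by omega)]
theorem lift_subst_le : ∀ (a : Lam) (d k : ℕ) (b : Lam), d ≤ k →
    lift d (subst a k b) = subst (lift d a) (k + 1) (lift d b) := by
  intro a
  induction a with
  | var n =>
      intro d k b h
      simp only [subst, lift]
      split_ifs <;> (try simp only [subst, lift]) <;> (try split_ifs) <;>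
        first | rfl | (exfalso; omega) | (congr 1; omega) | (exact (subst_lift _ _ _).symm)
  | app a b iha ihb => intro d k u h; simp only [subst, lift, iha _ _ _ h, ihb _ _ _ h]
  | abs a ih =>
      intro d k u h
      simp only [subst, lift]
      rw [ih (d+1) (k+1) (lift 0 u) (by omega), lift_lift u 0 d (by omega)]
theorem lift_subst_ge : ∀ (a : Lam) (d k : ℕ) (b : Lam), k ≤ d →
    lift d (subst a k b) = subst (lift (d + 1) a) k (lift d b) := by
  intro a
  induction a with
  | var n =>
      intro d k b h
      simp only [subst, lift]
      split_ifs <;> (try simp only [subst, lift]) <;> (try split_ifs) <;>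
        first | rfl | (exfalso; omega) | (congr 1; omega)
  | app a b iha ihb => intro d k u h; simp only [subst, lift, iha _ _ _ h, ihb _ _ _ h]
  | abs a ih =>
      intro d k u h
      simp only [subst, lift]
      rw [ih (d+1) (k+1) (lift 0 u) (by omega), lift_lift u 0 d (by omega)]
theorem subst_lift : ∀ (u : Lam) (i : ℕ) (v : Lam), subst (lift i u) i v = u := by
  intro u
  induction u with
  | var n =>
      intro i v
      simp only [lift]
      split_ifs <;> simp only [subst] <;> split_ifs <;>
        first | rfl | (exfalso; omega) | (congr 1; omega)
  | app a b iha ihb => intro i v; simp only [lift, subst, iha, ihb]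
  | abs a ih => intro i v; simp only [lift, subst, ih]
theorem subst_subst : ∀ (P : Lam) (i k : ℕ) (Q u : Lam), i ≤ k →
    subst (subst P i Q) k u = subst (subst P (k + 1) (lift i u)) i (subst Q k u) := by
  intro P
  induction P with
  | var n =>
      intro i k Q u h
      simp only [subst, lift]
      split_ifs <;> (try simp only [subst, lift]) <;> (try split_ifs) <;>
        first | rfl | (exfalso; omega) | (congr 1; omega) | (exact (subst_lift _ _ _).symm)
  | app a b iha ihb => intro i k Q u h; simp only [subst, iha _ _ _ _ h, ihb _ _ _ _ h]
  | abs a ih =>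
      intro i k Q u h
      simp only [subst]
      rw [ih (i+1) (k+1) (lift 0 Q) (lift 0 u) (by omega),
        lift_lift u 0 i (by omega), lift_subst_le Q 0 k u (by omega)]

/-! ### Weak head reduction, head reduction, standard reduction -/

/-- One-step weak head reduction. -/
inductive WHStep : Lam → Lam → Prop
  | beta (a b : Lam) : WHStep (app (abs a) b) (subst a 0 b)
  | app {a a' : Lam} (b : Lam) : WHStep a a' → WHStep (app a b) (app a' b)

/-- Weak head reduction (refl-trans). -/
def WHSteps : Lam → Lam → Prop := Relation.ReflTransGen WHStep

/-- One-step head reduction (deterministic). -/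
inductive HStep : Lam → Lam → Prop
  | beta (a b : Lam) : HStep (app (abs a) b) (subst a 0 b)
  | app {a a' : Lam} (b : Lam) : (∀ c, a ≠ abs c) → HStep a a' → HStep (app a b) (app a' b)
  | abs {a a' : Lam} : HStep a a' → HStep (Lam.abs a) (Lam.abs a')

/-- Head normalizing terms. -/
inductive HN : Lam → Prop
  | hnf {t : Lam} : IsHNF t → HN t
  | step {t t' : Lam} : HStep t t' → HN t' → HN t

/-- Kashima's standard reduction predicate. -/
inductive St : Lam → Lam → Prop
  | var {t : Lam} {n : ℕ} : WHSteps t (var n) → St t (var n)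
  | app {t a b a' b' : Lam} : WHSteps t (app a b) → St a a' → St b b' → St t (app a' b')
  | abs {t a a' : Lam} : WHSteps t (abs a) → St a a' → St t (abs a')

theorem whstep_not_abs {a t : Lam} (h : WHStep (abs a) t) : False := by cases h

theorem whstep_subst {t t' : Lam} (h : WHStep t t') (k : ℕ) (u : Lam) :
    WHStep (subst t k u) (subst t' k u) := by
  induction h generalizing k u with
  | beta a b =>
      simp only [subst]
      rw [subst_subst a 0 k b u (by omega)]
      exact WHStep.beta _ _
  | app b _ ih => exact WHStep.app _ (ih k u)

theorem whstep_lift {t t' : Lam} (h : WHStep t t') (d : ℕ) :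
    WHStep (lift d t) (lift d t') := by
  induction h generalizing d with
  | beta a b =>
      simp only [lift]
      rw [lift_subst_ge a d 0 b (by omega)]
      exact WHStep.beta _ _
  | app b _ ih => exact WHStep.app _ (ih d)

theorem whsteps_subst {t t' : Lam} (h : WHSteps t t') (k : ℕ) (u : Lam) :
    WHSteps (subst t k u) (subst t' k u) := by
  induction h with
  | refl => exact Relation.ReflTransGen.refl
  | tail _ h2 ih => exact ih.tail (whstep_subst h2 k u)

theorem whsteps_lift {t t' : Lam} (h : WHSteps t t') (d : ℕ) :
    WHSteps (lift d t) (lift d t') := by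
  induction h with
  | refl => exact Relation.ReflTransGen.refl
  | tail _ h2 ih => exact ih.tail (whstep_lift h2 d)

theorem whsteps_app {a a' : Lam} (b : Lam) (h : WHSteps a a') :
    WHSteps (app a b) (app a' b) := by
  induction h with
  | refl => exact Relation.ReflTransGen.refl
  | tail _ h2 ih => exact ih.tail (WHStep.app b h2)

theorem st_refl (t : Lam) : St t t := by
  induction t with
  | var n => exact St.var Relation.ReflTransGen.refl
  | app a b iha ihb => exact St.app Relation.ReflTransGen.refl iha ihb
  | abs a ih => exact St.abs Relation.ReflTransGen.refl ih

theorem st_wh {t u v : Lam} (h : WHSteps t u) (h2 : St u v) : St t v := by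
  cases h2 with
  | var hw => exact St.var (h.trans hw)
  | app hw h1 h2 => exact St.app (h.trans hw) h1 h2
  | abs hw h1 => exact St.abs (h.trans hw) h1

theorem st_lift {t t' : Lam} (h : St t t') (d : ℕ) : St (lift d t) (lift d t') := by
  induction h generalizing d with
  | @var t n hw =>
      have hw' := whsteps_lift hw d
      simp only [lift] at hw' ⊢
      split_ifs at hw' ⊢ <;> exact St.var hw'
  | @app t a b a' b' hw _ _ iha ihb =>
      have hw' := whsteps_lift hw d
      simp only [lift] at hw' ⊢
      exact St.app hw' (iha d) (ihb d)
  | @abs t a a' hw _ ih =>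
      have hw' := whsteps_lift hw d
      simp only [lift] at hw' ⊢
      exact St.abs hw' (ih (d + 1))

theorem st_subst {t t' : Lam} (h : St t t') : ∀ (k : ℕ) {u u' : Lam}, St u u' →
    St (subst t k u) (subst t' k u') := by
  induction h with
  | @var t n hw =>
      intro k u u' hu
      have hw' := whsteps_subst hw k u
      simp only [subst] at hw' ⊢
      split_ifs at hw' ⊢
      · exact st_wh hw' hu
      · exact St.var hw'
      · exact St.var hw'
  | @app t a b a' b' hw _ _ iha ihb =>
      intro k u u' hu
      have hw' := whsteps_subst hw k u
      simp only [subst] at hw' ⊢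
      exact St.app hw' (iha k hu) (ihb k hu)
  | @abs t a a' hw _ ih =>
      intro k u u' hu
      have hw' := whsteps_subst hw k u
      simp only [subst] at hw' ⊢
      exact St.abs hw' (ih (k + 1) (st_lift hu 0))

theorem st_step {u v : Lam} (hs : Step u v) : ∀ {t : Lam}, St t u → St t v := by
  induction hs with
  | beta a b =>
      intro t h
      cases h with
      | app hw h1 h2 =>
        cases h1 with
        | abs hw2 h3 =>
            refine st_wh ?_ (st_subst h3 0 h2)
            exact (hw.trans (whsteps_app _ hw2)).tail (WHStep.beta _ _)
  | @appL a a' b _ ih =>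
      intro t h
      cases h with
      | app hw h1 h2 => exact St.app hw (ih h1) h2
  | @appR a b b' _ ih =>
      intro t h
      cases h with
      | app hw h1 h2 => exact St.app hw h1 (ih h2)
  | @abs a a' _ ih =>
      intro t h
      cases h with
      | abs hw h1 => exact St.abs hw (ih h1)

theorem standardization {t u : Lam} (h : Steps t u) : St t u := by
  induction h with
  | refl => exact st_refl t
  | tail _ h2 ih => exact st_step h2 ih
/-! ### Head normalization and solvability -/

theorem isHNF_abs_inv {a : Lam} (h : IsHNF (abs a)) : IsHNF a := by
  cases h with
  | head h => cases h
  | abs h => exact h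

theorem isHNF_app_inv {a b : Lam} (h : IsHNF (app a b)) : HeadVarApp a := by
  cases h with
  | head h => cases h with | app _ h => exact h

theorem hstep_not_hnf {t t' : Lam} (h : HStep t t') : ¬ IsHNF t := by
  induction h with
  | beta a b => intro hh; cases isHNF_app_inv hh
  | app b hne _ ih =>
      intro hh
      exact ih (IsHNF.head (isHNF_app_inv hh))
  | abs _ ih => intro hh; exact ih (isHNF_abs_inv hh)

theorem hstep_progress : ∀ {t : Lam}, ¬ IsHNF t → ∃ t', HStep t t' := by
  intro t
  induction t with
  | var n => intro h; exact absurd (IsHNF.head (HeadVarApp.var n)) h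
  | app a b iha ihb =>
      intro h
      match a, iha with
      | var n, _ => exact absurd (IsHNF.head (HeadVarApp.app b (HeadVarApp.var n))) h
      | abs p, _ => exact ⟨_, HStep.beta p b⟩
      | app a1 a2, iha =>
          have hna : ¬ IsHNF (app a1 a2) := by
            intro hh
            exact h (IsHNF.head (HeadVarApp.app b (isHNF_app_inv hh |>.app a2)))
          obtain ⟨a', ha⟩ := iha hna
          exact ⟨_, HStep.app b (fun c hc => by cases hc) ha⟩
  | abs a ih =>
      intro h
      obtain ⟨a', ha⟩ := ih (fun hh => h (IsHNF.abs hh))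
      exact ⟨_, HStep.abs ha⟩

theorem hstep_det {t u v : Lam} (h : HStep t u) : HStep t v → u = v := by
  induction h generalizing v with
  | beta a b =>
      intro h2
      cases h2 with
      | beta => rfl
      | app _ hne _ => exact absurd rfl (hne _)
  | app b hne _ ih =>
      intro h2
      cases h2 with
      | beta => exact absurd rfl (hne _)
      | app _ _ h3 => rw [ih h3]
  | abs _ ih =>
      intro h2
      cases h2 with
      | abs h3 => rw [ih h3]

theorem hstep_subst {t t' : Lam} (h : HStep t t') (k : ℕ) (u : Lam) :
    HStep (subst t k u) (subst t' k u) := by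
  induction h generalizing k u with
  | beta a b =>
      simp only [subst]
      rw [subst_subst a 0 k b u (by omega)]
      exact HStep.beta _ _
  | @app a a' b hne h ih =>
      simp only [subst]
      have : ∃ p q, a = app p q := by
        cases h with
        | beta p q => exact ⟨_, _, rfl⟩
        | app _ _ _ => exact ⟨_, _, rfl⟩
        | abs _ => exact absurd rfl (hne _)
      obtain ⟨p, q, rfl⟩ := this
      exact HStep.app _ (fun c hc => by simp [subst] at hc) (ih k u)
  | abs _ ih =>
      simp only [subst]
      exact HStep.abs (ih (k + 1) (lift 0 u))

theorem hstep_lift {t t' : Lam} (h : HStep t t') (d : ℕ) :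
    HStep (lift d t) (lift d t') := by
  induction h generalizing d with
  | beta a b =>
      simp only [lift]
      rw [lift_subst_ge a d 0 b (by omega)]
      exact HStep.beta _ _
  | @app a a' b hne h ih =>
      simp only [lift]
      have : ∃ p q, a = app p q := by
        cases h with
        | beta p q => exact ⟨_, _, rfl⟩
        | app _ _ _ => exact ⟨_, _, rfl⟩
        | abs _ => exact absurd rfl (hne _)
      obtain ⟨p, q, rfl⟩ := this
      exact HStep.app _ (fun c hc => by simp [lift] at hc) (ih d)
  | abs _ ih =>
      simp only [lift]
      exact HStep.abs (ih (d + 1))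

theorem hn_abs {a : Lam} (h : HN a) : HN (abs a) := by
  induction h with
  | hnf h => exact HN.hnf (IsHNF.abs h)
  | step h _ ih => exact HN.step (HStep.abs h) ih

theorem hn_prepend {t u : Lam} (h : Relation.ReflTransGen HStep t u) (hu : HN u) : HN t := by
  induction h using Relation.ReflTransGen.head_induction_on with
  | refl => exact hu
  | head h _ ih => exact HN.step h ih

theorem whstep_hstep {t u : Lam} (h : WHStep t u) : HStep t u := by
  induction h with
  | beta a b => exact HStep.beta a b
  | @app a a' b h ih =>
      refine HStep.app b (fun c hc => ?_) ih
      subst hc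
      exact whstep_not_abs h

theorem whsteps_hsteps {t u : Lam} (h : WHSteps t u) : Relation.ReflTransGen HStep t u :=
  Relation.ReflTransGen.mono (fun _ _ h => whstep_hstep h) _ _ h

theorem st_hva {a a' : Lam} (h : St a a') (hv : HeadVarApp a') :
    ∃ a₀, WHSteps a a₀ ∧ HeadVarApp a₀ := by
  induction h with
  | var hw => exact ⟨_, hw, hv⟩
  | app hw h1 h2 ih1 ih2 =>
      cases hv with
      | app _ hv' =>
          obtain ⟨c₀, hc, hhc⟩ := ih1 hv'
          exact ⟨_, hw.trans (whsteps_app _ hc), HeadVarApp.app _ hhc⟩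
  | abs hw h1 ih => cases hv

theorem st_hn {t h : Lam} (hst : St t h) (hh : IsHNF h) : HN t := by
  induction hst with
  | var hw => exact hn_prepend (whsteps_hsteps hw) (HN.hnf (IsHNF.head (HeadVarApp.var _)))
  | app hw h1 h2 ih1 ih2 =>
      have hv := isHNF_app_inv hh
      obtain ⟨a₀, hc, hhc⟩ := st_hva h1 hv
      refine hn_prepend (whsteps_hsteps (hw.trans (whsteps_app _ hc))) ?_
      exact HN.hnf (IsHNF.head (HeadVarApp.app _ hhc))
  | abs hw h1 ih =>
      exact hn_prepend (whsteps_hsteps hw) (hn_abs (ih (isHNF_abs_inv hh)))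

theorem solvable_hn {t : Lam} (h : Solvable t) : HN t := by
  obtain ⟨w, hs, hw⟩ := h
  exact st_hn (standardization hs) hw

theorem hstep_step {t u : Lam} (h : HStep t u) : Step t u := by
  induction h with
  | beta a b => exact Step.beta a b
  | app b _ _ ih => exact Step.appL b ih
  | abs _ ih => exact Step.abs ih

theorem hn_solvable {t : Lam} (h : HN t) : Solvable t := by
  induction h with
  | hnf h => exact ⟨_, Relation.ReflTransGen.refl, h⟩
  | step h _ ih =>
      obtain ⟨w, hs, hw⟩ := ih
      exact ⟨w, Relation.ReflTransGen.head (hstep_step h) hs, hw⟩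

theorem hn_subst_rev {k : ℕ} {u : Lam} : ∀ {s : Lam}, HN s → ∀ t, s = subst t k u → HN t := by
  intro s hs
  induction hs with
  | @hnf s h =>
      intro t heq
      by_cases ht : IsHNF t
      · exact HN.hnf ht
      · obtain ⟨t', hstep⟩ := hstep_progress ht
        exact absurd (heq ▸ h) (hstep_not_hnf (hstep_subst hstep k u))
  | @step s s' h1 h2 ih =>
      intro t heq
      by_cases ht : IsHNF t
      · exact HN.hnf ht
      · obtain ⟨t', hstep⟩ := hstep_progress ht
        have h3 : HStep s (subst t' k u) := heq ▸ hstep_subst hstep k u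
        exact HN.step hstep (ih t' (hstep_det h1 h3))

theorem hn_lift_rev {d : ℕ} : ∀ {s : Lam}, HN s → ∀ t, s = lift d t → HN t := by
  intro s hs
  induction hs with
  | @hnf s h =>
      intro t heq
      by_cases ht : IsHNF t
      · exact HN.hnf ht
      · obtain ⟨t', hstep⟩ := hstep_progress ht
        exact absurd (heq ▸ h) (hstep_not_hnf (hstep_lift hstep d))
  | @step s s' h1 h2 ih =>
      intro t heq
      by_cases ht : IsHNF t
      · exact HN.hnf ht
      · obtain ⟨t', hstep⟩ := hstep_progress ht
        have h3 : HStep s (lift d t') := heq ▸ hstep_lift hstep d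
        exact HN.step hstep (ih t' (hstep_det h1 h3))

theorem unsolvable_subst {t : Lam} (h : ¬ Solvable t) (k : ℕ) (u : Lam) :
    ¬ Solvable (subst t k u) := fun hs =>
  h (hn_solvable (hn_subst_rev (solvable_hn hs) t rfl))

theorem unsolvable_lift {t : Lam} (h : ¬ Solvable t) (d : ℕ) :
    ¬ Solvable (lift d t) := fun hs =>
  h (hn_solvable (hn_lift_rev (solvable_hn hs) t rfl))
/-! ### Ω-reduction lemmas and postponement -/

theorem lift_Omega (d : ℕ) : lift d Omega = Omega := by
  simp [Omega, lift]

theorem subst_Omega (k : ℕ) (u : Lam) : subst Omega k u = Omega := by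
  simp [Omega, subst]

theorem step_Omega {c : Lam} (h : Step Omega c) : c = Omega := by
  simp only [Omega] at h
  cases h with
  | beta a b => simp [subst, Omega]
  | appL b h =>
      cases h with
      | abs h =>
          cases h with
          | appL b h => cases h
          | appR a h => cases h
  | appR a h =>
      cases h with
      | abs h =>
          cases h with
          | appL b h => cases h
          | appR a h => cases h

theorem omegaStep_subst {t t' : Lam} (h : OmegaStep t t') (k : ℕ) (u : Lam) :
    OmegaStep (subst t k u) (subst t' k u) := by
  induction h generalizing k u with
  | unsolv hu => rw [subst_Omega]; exact OmegaStep.unsolv (unsolvable_subst hu k u)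
  | appL b _ ih => exact OmegaStep.appL _ (ih k u)
  | appR a _ ih => exact OmegaStep.appR _ (ih k u)
  | abs _ ih => exact OmegaStep.abs (ih (k + 1) (lift 0 u))

theorem omegaStep_lift {t t' : Lam} (h : OmegaStep t t') (d : ℕ) :
    OmegaStep (lift d t) (lift d t') := by
  induction h generalizing d with
  | unsolv hu => rw [lift_Omega]; exact OmegaStep.unsolv (unsolvable_lift hu d)
  | appL b _ ih => exact OmegaStep.appL _ (ih d)
  | appR a _ ih => exact OmegaStep.appR _ (ih d)
  | abs _ ih => exact OmegaStep.abs (ih (d + 1))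

theorem omegaSteps_appL {a a' : Lam} (b : Lam) (h : OmegaSteps a a') :
    OmegaSteps (app a b) (app a' b) := by
  induction h with
  | refl => exact Relation.ReflTransGen.refl
  | tail _ h2 ih => exact ih.tail (OmegaStep.appL b h2)

theorem omegaSteps_appR (a : Lam) {b b' : Lam} (h : OmegaSteps b b') :
    OmegaSteps (app a b) (app a b') := by
  induction h with
  | refl => exact Relation.ReflTransGen.refl
  | tail _ h2 ih => exact ih.tail (OmegaStep.appR a h2)

theorem omegaSteps_abs {a a' : Lam} (h : OmegaSteps a a') :
    OmegaSteps (abs a) (abs a') := by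
  induction h with
  | refl => exact Relation.ReflTransGen.refl
  | tail _ h2 ih => exact ih.tail (OmegaStep.abs h2)

theorem omegaSteps_subst_arg {u u' : Lam} (h : OmegaStep u u') :
    ∀ (t : Lam) (k : ℕ), OmegaSteps (subst t k u) (subst t k u') := by
  intro t
  induction t generalizing u u' with
  | var n =>
      intro k
      simp only [subst]
      split_ifs
      · exact Relation.ReflTransGen.single h
      · exact Relation.ReflTransGen.refl
      · exact Relation.ReflTransGen.refl
  | app a b iha ihb =>
      intro k
      simp only [subst]
      exact (omegaSteps_appL _ (iha h k)).trans (omegaSteps_appR _ (ihb h k))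
  | abs a ih =>
      intro k
      simp only [subst]
      exact omegaSteps_abs (ih (omegaStep_lift h 0) (k + 1))
  termination_by t => t
  decreasing_by all_goals (simp_wf; omega)

theorem omegaStep_abs_inv {x e : Lam} (h : OmegaStep x (abs e)) :
    ∃ x₀, x = abs x₀ ∧ OmegaStep x₀ e := by
  generalize habs : abs e = y at h
  cases h with
  | unsolv hu => exact absurd habs (by simp [Omega])
  | appL b h => exact absurd habs (by simp)
  | appR a h => exact absurd habs (by simp)
  | abs h => exact ⟨_, rfl, by cases habs; exact h⟩

/-- The key single-step swap: an Ω-step followed by a β-step can be replaced by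
at most one β-step followed by Ω-steps. -/
theorem swap_step {a b c : Lam} (ho : OmegaStep a b) (hs : Step b c) :
    ∃ d, Relation.ReflGen Step a d ∧ OmegaSteps d c := by
  induction ho generalizing c with
  | @unsolv t hu =>
      rw [step_Omega hs]
      exact ⟨t, Relation.ReflGen.refl, Relation.ReflTransGen.single (OmegaStep.unsolv hu)⟩
  | @appL a₁ a₁' b₁ ho ih =>
      cases hs with
      | beta e b₁ =>
          obtain ⟨a₀, rfl, ho'⟩ := omegaStep_abs_inv ho
          exact ⟨subst a₀ 0 b₁, Relation.ReflGen.single (Step.beta a₀ b₁),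
            Relation.ReflTransGen.single (omegaStep_subst ho' 0 b₁)⟩
      | @appL _ x _ hx =>
          obtain ⟨d, hd, ho2⟩ := ih hx
          refine ⟨app d b₁, ?_, omegaSteps_appL b₁ ho2⟩
          cases hd with
          | refl => exact Relation.ReflGen.refl
          | single h => exact Relation.ReflGen.single (Step.appL b₁ h)
      | @appR _ _ b₁' hb =>
          exact ⟨app a₁ b₁', Relation.ReflGen.single (Step.appR a₁ hb),
            Relation.ReflTransGen.single (OmegaStep.appL b₁' ho)⟩
  | @appR a₁ b₁ b₁' ho ih =>
      cases hs with
      | beta e =>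
          exact ⟨subst e 0 b₁, Relation.ReflGen.single (Step.beta e b₁),
            omegaSteps_subst_arg ho e 0⟩
      | @appL _ a₁'' _ ha =>
          exact ⟨app a₁'' b₁, Relation.ReflGen.single (Step.appL b₁ ha),
            Relation.ReflTransGen.single (OmegaStep.appR a₁'' ho)⟩
      | @appR _ _ y hy =>
          obtain ⟨d, hd, ho2⟩ := ih hy
          refine ⟨app a₁ d, ?_, omegaSteps_appR a₁ ho2⟩
          cases hd with
          | refl => exact Relation.ReflGen.refl
          | single h => exact Relation.ReflGen.single (Step.appR a₁ h)
  | @abs a₁ a₁' ho ih =>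
      cases hs with
      | abs hx =>
          obtain ⟨d, hd, ho2⟩ := ih hx
          refine ⟨abs d, ?_, omegaSteps_abs ho2⟩
          cases hd with
          | refl => exact Relation.ReflGen.refl
          | single h => exact Relation.ReflGen.single (Step.abs h)

theorem swap_many {x y z : Lam} (ho : OmegaSteps x y) (hs : Step y z) :
    ∃ w, Relation.ReflGen Step x w ∧ OmegaSteps w z := by
  induction ho using Relation.ReflTransGen.head_induction_on with
  | refl => exact ⟨z, Relation.ReflGen.single hs, Relation.ReflTransGen.refl⟩
  | head h _ ih =>
      obtain ⟨w, hr, hw⟩ := ih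
      cases hr with
      | refl => exact ⟨_, Relation.ReflGen.refl, Relation.ReflTransGen.head h hw⟩
      | single s =>
          obtain ⟨d, hr2, hd⟩ := swap_step h s
          exact ⟨d, hr2, hd.trans hw⟩

theorem swap_full {x y z : Lam} (ho : OmegaSteps x y) (hs : Steps y z) :
    ∃ w, Steps x w ∧ OmegaSteps w z := by
  induction hs using Relation.ReflTransGen.head_induction_on generalizing x with
  | refl => exact ⟨x, Relation.ReflTransGen.refl, ho⟩
  | head h _ ih =>
      obtain ⟨w, hr, hw⟩ := swap_many ho h
      obtain ⟨w', hs', hw'⟩ := ih hw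
      cases hr with
      | refl => exact ⟨w', hs', hw'⟩
      | single s => exact ⟨w', Relation.ReflTransGen.head s hs', hw'⟩

end Lam

open Lam in
/-- Ω-postponement: if `u ▷_{βΩ}* v` then there is `w` with
`u ▷* w` and `w ▷_Ω* v`. -/
theorem omega_postponement (u v : Lam) (h : BOSteps u v) :
    ∃ w, Steps u w ∧ OmegaSteps w v := by
  induction h with
  | refl => exact ⟨u, Relation.ReflTransGen.refl, Relation.ReflTransGen.refl⟩
  | tail _ h2 ih =>
      obtain ⟨w, hs, ho⟩ := ih
      cases h2 with
      | inl hstep =>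
          obtain ⟨w', hr, ho'⟩ := swap_many ho hstep
          refine ⟨w', ?_, ho'⟩
          cases hr with
          | refl => exact hs
          | single s => exact hs.tail s
      | inr homega => exact ⟨w, hs, ho.tail homega⟩
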